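/- The number of λυ-terms of size n with exactly k β-redexes, b(n,k), has bivariate generating function T(z,u) = Σ b(n,k) z^n u^k satisfying T(z,u) = z/(1-z) + z T(z,u) + z T(z,u) S(z,u) + z T(z,u)² + (u-1) z² T(z,u)², where S(z,u) = z T(z,u) + z S(z,u) + z. In particular, specializing u = 1 recovers the Catalan generating function: T(z,1) = C(z) - 1. -/

import Mathlib

open Finset Filter

mutual
inductive Tm : Type
  | idx : Nat → Tm
  | lam : Tm → Tm
  | app : Tm → Tm → Tm
  | clos : Tm → Subst → Tm
inductive Subst : Type
  | slash : Tm → Subst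
  | lift : Subst → Subst
  | shift : Subst
end

mutual
/-- Natural size of a λυ-term: every constructor weighs 1; index n has size n+1. -/
def Tm.size : Tm → Nat
  | .idx n => n + 1
  | .lam a => Tm.size a + 1
  | .app a b => Tm.size a + Tm.size b + 1
  | .clos a s => Tm.size a + Subst.size s + 1
/-- Natural size of an explicit substitution. -/
def Subst.size : Subst → Nat
  | .slash a => Tm.size a + 1
  | .lift s => Subst.size s + 1
  | .shift => 1
end

/-- Number of λυ-terms of size `n`. -/
noncomputable def tcount (n : ℕ) : ℕ := Nat.card {a : Tm // Tm.size a = n}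

/-- Number of explicit substitutions of size `n`. -/
noncomputable def scount (n : ℕ) : ℕ := Nat.card {s : Subst // Subst.size s = n}

mutual
/-- Number of (beta)-redexes occurring in a λυ-term. -/
def Tm.betaCount : Tm → ℕ
  | .idx _ => 0
  | .lam a => Tm.betaCount a
  | .app (.lam a) b => Tm.betaCount a + Tm.betaCount b + 1
  | .app a b => Tm.betaCount a + Tm.betaCount b
  | .clos a s => Tm.betaCount a + Subst.betaCount s
/-- Number of (beta)-redexes occurring in a substitution. -/
def Subst.betaCount : Subst → ℕ
  | .slash a => Tm.betaCount a
  | .lift s => Subst.betaCount s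
  | .shift => 0
end

open MvPowerSeries

/-- Number of λυ-terms of size n with exactly k β-redexes. -/
noncomputable def bcount (n k : ℕ) : ℕ :=
  Nat.card {a : Tm // Tm.size a = n ∧ Tm.betaCount a = k}

/-- Number of substitutions of size n with exactly k β-redexes. -/
noncomputable def bscount (n k : ℕ) : ℕ :=
  Nat.card {s : Subst // Subst.size s = n ∧ Subst.betaCount s = k}

/-- Bivariate generating function of λυ-terms by size (z) and number of β-redexes (u). -/
noncomputable def Tzu : MvPowerSeries (Fin 2) ℚ :=
  fun e => (bcount (e 0) (e 1) : ℚ)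

/-- Bivariate generating function of substitutions by size and number of β-redexes. -/
noncomputable def Szu : MvPowerSeries (Fin 2) ℚ :=
  fun e => (bscount (e 0) (e 1) : ℚ)

noncomputable def z : MvPowerSeries (Fin 2) ℚ := MvPowerSeries.X 0
noncomputable def u : MvPowerSeries (Fin 2) ℚ := MvPowerSeries.X 1

deriving instance DecidableEq for Tm, Subst



mutual
def TF : ℕ → Finset Tm
  | 0 => ∅
  | n+1 =>
    ({Tm.idx n} : Finset Tm) ∪ (TF n).image Tm.lam
    ∪ ((range (n+1)).attach.biUnion fun i =>
        ((TF i.1 ×ˢ TF (n - i.1)).image fun p => Tm.app p.1 p.2))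
    ∪ ((range (n+1)).attach.biUnion fun i =>
        ((TF i.1 ×ˢ SF (n - i.1)).image fun p => Tm.clos p.1 p.2))
  termination_by n => n
  decreasing_by all_goals (first | omega | (have := i.2; simp only [Finset.mem_range] at this; omega))
def SF : ℕ → Finset Subst
  | 0 => ∅
  | n+1 =>
    (TF n).image Subst.slash ∪ (SF n).image Subst.lift
    ∪ (if n = 0 then {Subst.shift} else ∅)
  termination_by n => n
  decreasing_by all_goals omega
end

theorem Tm.size_pos : ∀ a : Tm, 1 ≤ a.size := by
  intro a; cases a <;> simp [Tm.size]

theorem Subst.size_pos : ∀ s : Subst, 1 ≤ s.size := by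
  intro s; cases s <;> simp [Subst.size, Tm.size]

theorem mem_aux : ∀ n, (∀ a : Tm, a ∈ TF n ↔ a.size = n) ∧ (∀ s : Subst, s ∈ SF n ↔ s.size = n) := by
  intro n
  induction n using Nat.strong_induction_on with
  | _ n IH =>
    match n with
    | 0 =>
      constructor <;> intro x <;> simp only [TF, SF, Finset.notMem_empty, false_iff]
      · have := Tm.size_pos x; omega
      · have := Subst.size_pos x; omega
    | n+1 =>
      constructor
      · intro a
        rw [TF]
        simp only [Finset.mem_union, Finset.mem_singleton, Finset.mem_image,
          Finset.mem_biUnion, Finset.mem_attach, true_and, Subtype.exists,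
          Finset.mem_range, Finset.mem_product, Prod.exists]
        constructor
        · rintro (((rfl | ⟨b, hb, rfl⟩) | ⟨i, hi, b, c, ⟨hb, hc⟩, rfl⟩) | ⟨i, hi, b, c, ⟨hb, hc⟩, rfl⟩)
          · simp [Tm.size]
          · have := (IH n (by omega)).1 b |>.mp hb
            simp [Tm.size, this]
          · have h1 := (IH i (by omega)).1 b |>.mp hb
            have h2 := (IH (n - i) (by omega)).1 c |>.mp hc
            simp only [Tm.size]; omega
          · have h1 := (IH i (by omega)).1 b |>.mp hb
            have h2 := (IH (n - i) (by omega)).2 c |>.mp hc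
            simp only [Tm.size]; omega
        · intro ha
          cases a with
          | idx m => left; left; left; simp only [Tm.size] at ha; exact congrArg Tm.idx (by omega)
          | lam b =>
            left; left; right
            exact ⟨b, (IH n (by omega)).1 b |>.mpr (by simp only [Tm.size] at ha; omega), rfl⟩
          | app b c =>
            simp only [Tm.size] at ha
            have hc1 := Tm.size_pos c
            have hb1 := Tm.size_pos b
            left; right
            refine ⟨b.size, by omega, b, c, ⟨(IH b.size (by omega)).1 b |>.mpr rfl,
              (IH (n - b.size) (by omega)).1 c |>.mpr (by omega)⟩, rfl⟩
          | clos b s =>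
            simp only [Tm.size] at ha
            have hc1 := Subst.size_pos s
            have hb1 := Tm.size_pos b
            right
            refine ⟨b.size, by omega, b, s, ⟨(IH b.size (by omega)).1 b |>.mpr rfl,
              (IH (n - b.size) (by omega)).2 s |>.mpr (by omega)⟩, rfl⟩
      · intro s
        rw [SF]
        simp only [Finset.mem_union, Finset.mem_image]
        constructor
        · rintro ((⟨b, hb, rfl⟩ | ⟨t, ht, rfl⟩) | h)
          · have := (IH n (by omega)).1 b |>.mp hb
            simp [Subst.size, this]
          · have := (IH n (by omega)).2 t |>.mp ht
            simp [Subst.size, this]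
          · split at h
            · simp only [Finset.mem_singleton] at h
              subst h; simp_all [Subst.size]
            · simp at h
        · intro hs
          cases s with
          | slash b =>
            left; left
            exact ⟨b, (IH n (by omega)).1 b |>.mpr (by simp only [Subst.size] at hs; omega), rfl⟩
          | lift t =>
            left; right
            exact ⟨t, (IH n (by omega)).2 t |>.mpr (by simp only [Subst.size] at hs; omega), rfl⟩
          | shift =>
            right
            simp only [Subst.size] at hs
            simp [show n = 0 by omega]

theorem mem_TF {n} {a : Tm} : a ∈ TF n ↔ a.size = n := (mem_aux n).1 a
theorem mem_SF {n} {s : Subst} : s ∈ SF n ↔ s.size = n := (mem_aux n).2 s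



def Tm.isLam : Tm → Prop
  | .lam _ => True
  | _ => False

instance : DecidablePred Tm.isLam := fun a => by
  cases a <;> simp [Tm.isLam] <;> infer_instance

theorem beta_app (a b : Tm) :
    (Tm.app a b).betaCount = a.betaCount + b.betaCount + (if a.isLam then 1 else 0) := by
  cases a <;> simp [Tm.betaCount, Tm.isLam]

theorem beta_le_size : ∀ a : Tm, a.betaCount ≤ a.size := by
  have key : ∀ N, (∀ a : Tm, a.size ≤ N → a.betaCount ≤ a.size)
      ∧ (∀ s : Subst, s.size ≤ N → s.betaCount ≤ s.size) := by
    intro N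
    induction N with
    | zero =>
      constructor
      · intro a ha; have := Tm.size_pos a; omega
      · intro s hs; have := Subst.size_pos s; omega
    | succ N IH =>
      constructor
      · intro a ha
        cases a with
        | idx m => simp [Tm.betaCount, Tm.size]
        | lam b =>
          simp only [Tm.betaCount, Tm.size] at *
          have := IH.1 b (by omega); omega
        | app b c =>
          rw [beta_app]
          simp only [Tm.size] at *
          have h1 := IH.1 b (by have := Tm.size_pos c; omega)
          have h2 := IH.1 c (by have := Tm.size_pos b; omega)
          cases b with
          | lam b' =>
            simp only [Tm.isLam, if_pos, ↓reduceIte, Tm.size] at *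
            omega
          | idx m => simp [Tm.isLam, Tm.betaCount, Tm.size] at *; omega
          | app x y => simp [Tm.isLam, beta_app, Tm.size] at *; omega
          | clos x y => simp [Tm.isLam, Tm.betaCount, Tm.size] at *; omega
        | clos b s =>
          simp only [Tm.betaCount, Tm.size] at *
          have h1 := IH.1 b (by have := Subst.size_pos s; omega)
          have h2 := IH.2 s (by have := Tm.size_pos b; omega)
          omega
      · intro s hs
        cases s with
        | slash b =>
          simp only [Subst.betaCount, Subst.size] at *
          have := IH.1 b (by omega); omega
        | lift t =>
          simp only [Subst.betaCount, Subst.size] at *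
          have := IH.2 t (by omega); omega
        | shift => simp [Subst.betaCount]
  intro a
  exact (key a.size).1 a le_rfl

/-- convolution on a product of finsets -/
theorem card_filter_prod {α β : Type*} [DecidableEq α] [DecidableEq β]
    (s : Finset α) (t : Finset β) (f : α → ℕ) (g : β → ℕ) (k : ℕ) :
    ((s ×ˢ t).filter fun p => f p.1 + g p.2 = k).card
      = ∑ j ∈ range (k+1), (s.filter fun a => f a = j).card * (t.filter fun b => g b = k - j).card := by
  have heq : ((s ×ˢ t).filter fun p => f p.1 + g p.2 = k)
      = (range (k+1)).biUnion
          (fun j => (s.filter fun a => f a = j) ×ˢ (t.filter fun b => g b = k - j)) := by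
    ext p
    simp only [mem_filter, mem_product, mem_biUnion, mem_range]
    constructor
    · rintro ⟨⟨h1, h2⟩, h3⟩
      exact ⟨f p.1, by omega, ⟨h1, rfl⟩, h2, by omega⟩
    · rintro ⟨j, hj, ⟨h1, hf⟩, h2, hg⟩
      exact ⟨⟨h1, h2⟩, by omega⟩
  rw [heq, Finset.card_biUnion]
  · simp [Finset.card_product]
  · intro j hj j' hj' hne
    simp only [Finset.disjoint_left]
    rintro p hp hp'
    simp only [mem_product, mem_filter] at hp hp'
    exact hne (by rw [← hp.1.2, ← hp'.1.2])

theorem app_inj2 : Function.Injective (fun p : Tm × Tm => Tm.app p.1 p.2) := by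
  rintro ⟨a, b⟩ ⟨c, d⟩ h
  simp only [Tm.app.injEq] at h
  simp [Prod.ext_iff, h.1, h.2]

theorem clos_inj2 : Function.Injective (fun p : Tm × Subst => Tm.clos p.1 p.2) := by
  rintro ⟨a, b⟩ ⟨c, d⟩ h
  simp only [Tm.clos.injEq] at h
  simp [Prod.ext_iff, h.1, h.2]

theorem card_TF_succ (P : Tm → Prop) [DecidablePred P] (n : ℕ) :
    ((TF (n+1)).filter P).card
      = (if P (Tm.idx n) then 1 else 0)
      + ((TF n).filter (fun a => P (Tm.lam a))).card
      + ∑ i ∈ range (n+1), ((TF i ×ˢ TF (n-i)).filter fun p => P (Tm.app p.1 p.2)).card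
      + ∑ i ∈ range (n+1), ((TF i ×ˢ SF (n-i)).filter fun p => P (Tm.clos p.1 p.2)).card := by
  rw [TF]
  set A : Finset Tm := {Tm.idx n} with hA
  set B := (TF n).image Tm.lam with hB
  set C := ((range (n+1)).attach.biUnion fun i =>
      ((TF i.1 ×ˢ TF (n - i.1)).image fun p => Tm.app p.1 p.2)) with hC
  set D := ((range (n+1)).attach.biUnion fun i =>
      ((TF i.1 ×ˢ SF (n - i.1)).image fun p => Tm.clos p.1 p.2)) with hD
  have shapeB : ∀ a ∈ B, ∃ b, a = Tm.lam b := by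
    intro a ha; rw [hB, Finset.mem_image] at ha; obtain ⟨b, _, rfl⟩ := ha; exact ⟨b, rfl⟩
  have shapeC : ∀ a ∈ C, ∃ b c, a = Tm.app b c := by
    intro a ha; rw [hC, Finset.mem_biUnion] at ha
    obtain ⟨i, _, ha⟩ := ha; rw [Finset.mem_image] at ha
    obtain ⟨p, _, rfl⟩ := ha; exact ⟨p.1, p.2, rfl⟩
  have shapeD : ∀ a ∈ D, ∃ b s, a = Tm.clos b s := by
    intro a ha; rw [hD, Finset.mem_biUnion] at ha
    obtain ⟨i, _, ha⟩ := ha; rw [Finset.mem_image] at ha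
    obtain ⟨p, _, rfl⟩ := ha; exact ⟨p.1, p.2, rfl⟩
  have dAB : Disjoint A B := by
    rw [Finset.disjoint_left]; intro a ha hb
    rw [hA, Finset.mem_singleton] at ha
    obtain ⟨b, hb'⟩ := shapeB a hb; subst ha; exact Tm.noConfusion hb'
  have dABC : Disjoint (A ∪ B) C := by
    rw [Finset.disjoint_left]; intro a ha hc
    obtain ⟨b, c, rfl⟩ := shapeC a hc
    rcases Finset.mem_union.mp ha with h | h
    · rw [hA, Finset.mem_singleton] at h; exact Tm.noConfusion h
    · obtain ⟨b', hb'⟩ := shapeB _ h; exact Tm.noConfusion hb'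
  have dABCD : Disjoint (A ∪ B ∪ C) D := by
    rw [Finset.disjoint_left]; intro a ha hd
    obtain ⟨b, s, rfl⟩ := shapeD a hd
    rcases Finset.mem_union.mp ha with h | h
    · rcases Finset.mem_union.mp h with h' | h'
      · rw [hA, Finset.mem_singleton] at h'; exact Tm.noConfusion h'
      · obtain ⟨b', hb'⟩ := shapeB _ h'; exact Tm.noConfusion hb'
    · obtain ⟨b', c', hb'⟩ := shapeC _ h; exact Tm.noConfusion hb'
  rw [Finset.filter_union, Finset.card_union_of_disjoint (Finset.disjoint_filter_filter dABCD)]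
  rw [Finset.filter_union, Finset.card_union_of_disjoint (Finset.disjoint_filter_filter dABC)]
  rw [Finset.filter_union, Finset.card_union_of_disjoint (Finset.disjoint_filter_filter dAB)]
  congr 1; congr 1; congr 1
  · -- A part
    rw [hA, Finset.filter_singleton]
    split <;> simp
  · -- B part
    rw [hB, Finset.filter_image, Finset.card_image_of_injective _ (fun a b h => by
      exact Tm.lam.inj h)]
  · -- C part
    rw [hC, Finset.filter_biUnion, Finset.card_biUnion]
    · rw [← Finset.sum_attach (range (n+1))
        (fun i => ((TF i ×ˢ TF (n-i)).filter fun p => P (Tm.app p.1 p.2)).card)]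
      apply Finset.sum_congr rfl
      intro i _
      rw [Finset.filter_image, Finset.card_image_of_injective _ app_inj2]
    · intro i _ j _ hne
      rw [Function.onFun, Finset.disjoint_left]
      intro a ha hb
      rw [Finset.mem_filter, Finset.mem_image] at ha hb
      obtain ⟨⟨p, hp, rfl⟩, _⟩ := ha
      obtain ⟨⟨q, hq, hq2⟩, _⟩ := hb
      rw [Finset.mem_product] at hp hq
      have h1 : p.1.size = i.1 := mem_TF.mp hp.1
      have h2 : q.1.size = j.1 := mem_TF.mp hq.1
      have : q.1 = p.1 := (Tm.app.inj hq2).1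
      exact hne (Subtype.ext (by rw [← h1, ← h2, this]))
  · -- D part
    rw [hD, Finset.filter_biUnion, Finset.card_biUnion]
    · rw [← Finset.sum_attach (range (n+1))
        (fun i => ((TF i ×ˢ SF (n-i)).filter fun p => P (Tm.clos p.1 p.2)).card)]
      apply Finset.sum_congr rfl
      intro i _
      rw [Finset.filter_image, Finset.card_image_of_injective _ clos_inj2]
    · intro i _ j _ hne
      rw [Function.onFun, Finset.disjoint_left]
      intro a ha hb
      rw [Finset.mem_filter, Finset.mem_image] at ha hb
      obtain ⟨⟨p, hp, rfl⟩, _⟩ := ha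
      obtain ⟨⟨q, hq, hq2⟩, _⟩ := hb
      rw [Finset.mem_product] at hp hq
      have h1 : p.1.size = i.1 := mem_TF.mp hp.1
      have h2 : q.1.size = j.1 := mem_TF.mp hq.1
      have : q.1 = p.1 := (Tm.clos.inj hq2).1
      exact hne (Subtype.ext (by rw [← h1, ← h2, this]))

theorem card_SF_succ (P : Subst → Prop) [DecidablePred P] (n : ℕ) :
    ((SF (n+1)).filter P).card
      = ((TF n).filter (fun a => P (Subst.slash a))).card
      + ((SF n).filter (fun s => P (Subst.lift s))).card
      + (if n = 0 ∧ P Subst.shift then 1 else 0) := by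
  rw [SF]
  set A := (TF n).image Subst.slash with hA
  set B := (SF n).image Subst.lift with hB
  set C := (if n = 0 then ({Subst.shift} : Finset Subst) else ∅) with hC
  have shapeA : ∀ s ∈ A, ∃ b, s = Subst.slash b := by
    intro s hs; rw [hA, Finset.mem_image] at hs; obtain ⟨b, _, rfl⟩ := hs; exact ⟨b, rfl⟩
  have shapeB : ∀ s ∈ B, ∃ t, s = Subst.lift t := by
    intro s hs; rw [hB, Finset.mem_image] at hs; obtain ⟨b, _, rfl⟩ := hs; exact ⟨b, rfl⟩
  have shapeC : ∀ s ∈ C, s = Subst.shift := by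
    intro s hs; rw [hC] at hs
    split at hs
    · exact Finset.mem_singleton.mp hs
    · exact absurd hs (Finset.notMem_empty s)
  have dAB : Disjoint A B := by
    rw [Finset.disjoint_left]; intro s ha hb
    obtain ⟨b, rfl⟩ := shapeA s ha
    obtain ⟨t, ht⟩ := shapeB _ hb; exact Subst.noConfusion ht
  have dABC : Disjoint (A ∪ B) C := by
    rw [Finset.disjoint_left]; intro s ha hc
    have := shapeC s hc; subst this
    rcases Finset.mem_union.mp ha with h | h
    · obtain ⟨b, hb⟩ := shapeA _ h; exact Subst.noConfusion hb
    · obtain ⟨t, ht⟩ := shapeB _ h; exact Subst.noConfusion ht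
  rw [Finset.filter_union, Finset.card_union_of_disjoint (Finset.disjoint_filter_filter dABC)]
  rw [Finset.filter_union, Finset.card_union_of_disjoint (Finset.disjoint_filter_filter dAB)]
  congr 1; congr 1
  · rw [hA, Finset.filter_image, Finset.card_image_of_injective _ (fun a b h => by
      exact Subst.slash.inj h)]
  · rw [hB, Finset.filter_image, Finset.card_image_of_injective _ (fun a b h => by
      exact Subst.lift.inj h)]
  · rw [hC]
    by_cases hn : n = 0
    · rw [if_pos hn, Finset.filter_singleton]
      by_cases hP : P Subst.shift
      · rw [if_pos hP, if_pos ⟨hn, hP⟩]; simp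
      · rw [if_neg hP, if_neg (fun h => hP h.2)]; simp
    · rw [if_neg hn, if_neg (fun h => hn h.1)]; simp

def bt (n k : ℕ) : ℕ := ((TF n).filter fun a => a.betaCount = k).card
def bs' (n k : ℕ) : ℕ := ((SF n).filter fun s => s.betaCount = k).card
def lb (n k : ℕ) : ℕ := ((TF n).filter fun a => a.isLam ∧ a.betaCount = k).card
def nb (n k : ℕ) : ℕ := ((TF n).filter fun a => ¬a.isLam ∧ a.betaCount = k).card
def cTT (n k : ℕ) : ℕ := ∑ i ∈ range (n+1), ∑ j ∈ range (k+1), bt i j * bt (n-i) (k-j)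
def cTS (n k : ℕ) : ℕ := ∑ i ∈ range (n+1), ∑ j ∈ range (k+1), bt i j * bs' (n-i) (k-j)
def cLT (n k : ℕ) : ℕ := ∑ i ∈ range (n+1), ∑ j ∈ range (k+1), lb i j * bt (n-i) (k-j)
def cNT (n k : ℕ) : ℕ := ∑ i ∈ range (n+1), ∑ j ∈ range (k+1), nb i j * bt (n-i) (k-j)

theorem bt0 (k : ℕ) : bt 0 k = 0 := by simp [bt, TF]
theorem bs0 (k : ℕ) : bs' 0 k = 0 := by simp [bs', SF]
theorem lb0 (k : ℕ) : lb 0 k = 0 := by simp [lb, TF]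

theorem lam_filter (n : ℕ) : (TF (n+1)).filter Tm.isLam = (TF n).image Tm.lam := by
  ext a
  rw [Finset.mem_filter, Finset.mem_image]
  constructor
  · rintro ⟨h1, h2⟩
    cases a with
    | lam b =>
      exact ⟨b, mem_TF.mpr (by have := mem_TF.mp h1; simp only [Tm.size] at this; omega), rfl⟩
    | idx m => exact absurd h2 (by simp [Tm.isLam])
    | app x y => exact absurd h2 (by simp [Tm.isLam])
    | clos x y => exact absurd h2 (by simp [Tm.isLam])
  · rintro ⟨b, hb, rfl⟩
    exact ⟨mem_TF.mpr (by have := mem_TF.mp hb; simp only [Tm.size]; omega), trivial⟩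

theorem lb_succ (n k : ℕ) : lb (n+1) k = bt n k := by
  rw [lb, bt]
  have : (fun a : Tm => a.isLam ∧ a.betaCount = k) = fun a =>
      Tm.isLam a ∧ a.betaCount = k := rfl
  rw [show ((TF (n+1)).filter fun a => a.isLam ∧ a.betaCount = k)
      = ((TF (n+1)).filter Tm.isLam).filter (fun a => a.betaCount = k) by
    rw [Finset.filter_filter]]
  rw [lam_filter, Finset.filter_image,
    Finset.card_image_of_injective _ (fun a b h => Tm.lam.inj h)]
  congr 1

theorem bt_split (n k : ℕ) : bt n k = lb n k + nb n k := by
  rw [bt, lb, nb]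
  rw [show ((TF n).filter fun a => a.isLam ∧ a.betaCount = k)
      = ((TF n).filter fun a => a.betaCount = k).filter Tm.isLam by
    rw [Finset.filter_filter]; apply Finset.filter_congr; intro a _; tauto]
  rw [show ((TF n).filter fun a => ¬a.isLam ∧ a.betaCount = k)
      = ((TF n).filter fun a => a.betaCount = k).filter (fun a => ¬ Tm.isLam a) by
    rw [Finset.filter_filter]; apply Finset.filter_congr; intro a _; tauto]
  rw [Finset.card_filter_add_card_filter_not]

theorem cTT_split (n k : ℕ) : cTT n k = cLT n k + cNT n k := by
  rw [cTT, cLT, cNT, ← Finset.sum_add_distrib]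
  apply Finset.sum_congr rfl
  intro i _
  rw [← Finset.sum_add_distrib]
  apply Finset.sum_congr rfl
  intro j _
  rw [bt_split i j, add_mul]

theorem cLT_succ (n k : ℕ) : cLT (n+1) k = cTT n k := by
  rw [cLT, cTT, Finset.sum_range_succ']
  simp only [lb0, zero_mul, Finset.sum_const_zero, add_zero]
  apply Finset.sum_congr rfl
  intro i _
  apply Finset.sum_congr rfl
  intro j _
  rw [lb_succ]
  congr 2
  omega

theorem cLT0 (k : ℕ) : cLT 0 k = 0 := by
  simp [cLT, lb0]

/-- app-pairs count -/
theorem app_pairs (i m k : ℕ) :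
    ((TF i ×ˢ TF m).filter fun p => (Tm.app p.1 p.2).betaCount = k).card
      = (if k = 0 then 0 else
          ∑ j ∈ range ((k-1)+1), lb i j * bt m ((k-1)-j))
        + ∑ j ∈ range (k+1), nb i j * bt m (k-j) := by
  have hsplit : TF i = (TF i).filter Tm.isLam ∪ (TF i).filter (fun a => ¬ Tm.isLam a) :=
    (Finset.filter_union_filter_not_eq _ _).symm
  rw [show (TF i ×ˢ TF m) = ((TF i).filter Tm.isLam ×ˢ TF m)
      ∪ ((TF i).filter (fun a => ¬ Tm.isLam a) ×ˢ TF m) by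
    rw [← Finset.union_product, ← hsplit]]
  have hdisj : Disjoint ((TF i).filter Tm.isLam ×ˢ TF m)
      ((TF i).filter (fun a => ¬ Tm.isLam a) ×ˢ TF m) := by
    rw [Finset.disjoint_left]
    rintro p hp hq
    rw [Finset.mem_product, Finset.mem_filter] at hp hq
    exact hq.1.2 hp.1.2
  rw [Finset.filter_union, Finset.card_union_of_disjoint (Finset.disjoint_filter_filter hdisj)]
  congr 1
  · -- lam part
    by_cases hk : k = 0
    · subst hk
      rw [if_pos rfl, Finset.card_eq_zero.mpr, ]
      rw [Finset.filter_eq_empty_iff]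
      rintro p hp
      rw [Finset.mem_product, Finset.mem_filter] at hp
      rw [beta_app, if_pos hp.1.2]
      omega
    · rw [if_neg hk]
      rw [show (((TF i).filter Tm.isLam ×ˢ TF m).filter fun p => (Tm.app p.1 p.2).betaCount = k)
          = (((TF i).filter Tm.isLam ×ˢ TF m).filter
              fun p => p.1.betaCount + p.2.betaCount = k - 1) by
        apply Finset.filter_congr
        rintro p hp
        rw [Finset.mem_product, Finset.mem_filter] at hp
        rw [beta_app, if_pos hp.1.2]
        constructor <;> intro h <;> omega]
      rw [card_filter_prod]
      apply Finset.sum_congr rfl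
      intro j _
      rw [Finset.filter_filter]
      rfl
  · -- non-lam part
    rw [show (((TF i).filter (fun a => ¬Tm.isLam a) ×ˢ TF m).filter
          fun p => (Tm.app p.1 p.2).betaCount = k)
        = (((TF i).filter (fun a => ¬Tm.isLam a) ×ˢ TF m).filter
            fun p => p.1.betaCount + p.2.betaCount = k) by
      apply Finset.filter_congr
      rintro p hp
      rw [Finset.mem_product, Finset.mem_filter] at hp
      rw [beta_app, if_neg hp.1.2]
      constructor <;> intro h <;> omega]
    rw [card_filter_prod]
    apply Finset.sum_congr rfl
    intro j _
    rw [Finset.filter_filter]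
    rfl

theorem bt_succ (n k : ℕ) :
    bt (n+1) k = (if k = 0 then 1 else 0) + bt n k
      + ((if k = 0 then 0 else cLT n (k-1)) + cNT n k) + cTS n k := by
  rw [bt, card_TF_succ]
  have h1 : (if (Tm.idx n).betaCount = k then 1 else 0) = (if k = 0 then 1 else 0) := by
    have : (Tm.idx n).betaCount = 0 := by simp [Tm.betaCount]
    rw [this]
    by_cases hk : k = 0 <;> simp [hk, eq_comm]
  have h2 : ((TF n).filter fun a => (Tm.lam a).betaCount = k).card = bt n k := by
    rw [bt]
    congr 1
  have h3 : ∑ i ∈ range (n+1),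
      ((TF i ×ˢ TF (n-i)).filter fun p => (Tm.app p.1 p.2).betaCount = k).card
      = (if k = 0 then 0 else cLT n (k-1)) + cNT n k := by
    rw [Finset.sum_congr rfl (fun i _ => app_pairs i (n-i) k), Finset.sum_add_distrib]
    congr 1
    by_cases hk : k = 0
    · simp [hk]
    · simp only [if_neg hk]
      rfl
  have h4 : ∑ i ∈ range (n+1),
      ((TF i ×ˢ SF (n-i)).filter fun p => (Tm.clos p.1 p.2).betaCount = k).card
      = cTS n k := by
    rw [cTS]
    apply Finset.sum_congr rfl
    intro i _
    rw [show ((TF i ×ˢ SF (n-i)).filter fun p => (Tm.clos p.1 p.2).betaCount = k)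
        = ((TF i ×ˢ SF (n-i)).filter fun p => p.1.betaCount + p.2.betaCount = k) by
      apply Finset.filter_congr
      intro p _
      simp [Tm.betaCount]]
    rw [card_filter_prod]
    exact Finset.sum_congr rfl (fun j _ => rfl)
  rw [h1, h2, h3, h4]

theorem bs_succ (n k : ℕ) :
    bs' (n+1) k = bt n k + bs' n k + (if n = 0 ∧ k = 0 then 1 else 0) := by
  rw [bs', card_SF_succ]
  have h1 : ((TF n).filter fun a => (Subst.slash a).betaCount = k).card = bt n k := by
    rw [bt]
    congr 1
  have h2 : ((SF n).filter fun s => (Subst.lift s).betaCount = k).card = bs' n k := by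
    rw [bs']
    congr 1
  have h3 : (if n = 0 ∧ (Subst.shift).betaCount = k then 1 else 0)
      = (if n = 0 ∧ k = 0 then 1 else 0) := by
    have : (Subst.shift).betaCount = 0 := by simp [Subst.betaCount]
    rw [this]
    by_cases h : n = 0 ∧ k = 0
    · rw [if_pos ⟨h.1, h.2.symm⟩, if_pos h]
    · rw [if_neg (fun hc => h ⟨hc.1, hc.2.symm⟩), if_neg h]
  rw [h1, h2, h3]

def tcn (n : ℕ) : ℕ := (TF n).card
def scn (n : ℕ) : ℕ := (SF n).card

theorem tcn0 : tcn 0 = 0 := by simp [tcn, TF]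
theorem scn0 : scn 0 = 0 := by simp [scn, SF]

theorem tcn_succ (n : ℕ) :
    tcn (n+1) = 1 + tcn n + ∑ i ∈ range (n+1), tcn i * tcn (n-i)
      + ∑ i ∈ range (n+1), tcn i * scn (n-i) := by
  have := card_TF_succ (fun _ => True) n
  simp only [Finset.filter_true, if_pos trivial, Finset.card_product] at this
  exact this

theorem scn_succ (n : ℕ) :
    scn (n+1) = tcn n + scn n + (if n = 0 then 1 else 0) := by
  have := card_SF_succ (fun _ => True) n
  simp only [Finset.filter_true, and_true] at this
  exact this

theorem bt_sum (n : ℕ) : ∑ k ∈ range (n+1), bt n k = tcn n := by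
  rw [tcn]
  rw [Finset.card_eq_sum_card_fiberwise (f := Tm.betaCount) (t := range (n+1))
    (fun a ha => by
      rw [Finset.mem_coe, Finset.mem_range]
      have h1 := beta_le_size a
      have h2 := mem_TF.mp (Finset.mem_coe.mp ha)
      omega)]
  exact Finset.sum_congr rfl (fun k _ => rfl)

theorem bcount_eq (n k : ℕ) : bcount n k = bt n k := by
  rw [bcount, bt, ← Nat.card_eq_finsetCard]
  apply Nat.card_congr
  apply Equiv.subtypeEquivRight
  intro a
  rw [Finset.mem_filter, mem_TF]

theorem bscount_eq (n k : ℕ) : bscount n k = bs' n k := by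
  rw [bscount, bs', ← Nat.card_eq_finsetCard]
  apply Nat.card_congr
  apply Equiv.subtypeEquivRight
  intro a
  rw [Finset.mem_filter, mem_SF]

open PowerSeries

noncomputable def Tz : PowerSeries ℚ := PowerSeries.mk (fun n => (tcn n : ℚ))
noncomputable def Sz : PowerSeries ℚ := PowerSeries.mk (fun n => (scn n : ℚ))
noncomputable def Gz : PowerSeries ℚ := PowerSeries.mk (fun n => if n = 0 then 0 else 1)

theorem coeff_mul_mk (f g : ℕ → ℚ) (n : ℕ) :
    PowerSeries.coeff n (PowerSeries.mk f * PowerSeries.mk g)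
      = ∑ i ∈ range (n+1), f i * g (n - i) := by
  rw [PowerSeries.coeff_mul, Finset.Nat.sum_antidiagonal_eq_sum_range_succ_mk]
  simp [PowerSeries.coeff_mk]

theorem eqS : Sz = PowerSeries.X * Tz + PowerSeries.X * Sz + PowerSeries.X := by
  ext n
  rcases n with _ | m
  · simp [Sz, PowerSeries.coeff_mk, scn0, PowerSeries.coeff_zero_X_mul]
  · simp only [map_add, Sz, Tz, PowerSeries.coeff_mk, PowerSeries.coeff_succ_X_mul]
    rw [scn_succ]
    rcases m with _ | m'
    · simp [PowerSeries.coeff_X, scn0, tcn0]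
    · simp [PowerSeries.coeff_X]

theorem eqT : Tz = Gz + PowerSeries.X * Tz + PowerSeries.X * (Tz * Sz) + PowerSeries.X * (Tz * Tz) := by
  ext n
  rcases n with _ | m
  · simp [Tz, Gz, PowerSeries.coeff_mk, tcn0, PowerSeries.coeff_zero_X_mul]
  · simp only [map_add, Tz, Gz, Sz, PowerSeries.coeff_mk, PowerSeries.coeff_succ_X_mul]
    rw [tcn_succ, coeff_mul_mk, coeff_mul_mk]
    push_cast
    ring

theorem hGz : Gz * (1 - PowerSeries.X) = PowerSeries.X := by
  have h : Gz * (1 - PowerSeries.X) = Gz - Gz * PowerSeries.X := by ring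
  rw [h]
  ext n
  rcases n with _ | m
  · simp [Gz, PowerSeries.coeff_mk, PowerSeries.coeff_X]
  · rw [map_sub, mul_comm Gz PowerSeries.X, PowerSeries.coeff_succ_X_mul]
    simp only [Gz, PowerSeries.coeff_mk, PowerSeries.coeff_X]
    rcases m with _ | m' <;> simp

noncomputable def Cs : PowerSeries ℚ := PowerSeries.mk (fun n => (catalan n : ℚ))

theorem hC : Cs = 1 + PowerSeries.X * Cs^2 := by
  ext n
  rcases n with _ | m
  · simp [Cs, PowerSeries.coeff_mk, PowerSeries.coeff_zero_X_mul]
  · simp only [map_add, Cs, PowerSeries.coeff_mk, sq, PowerSeries.coeff_succ_X_mul,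
      PowerSeries.coeff_one, Nat.succ_ne_zero, if_false]
    rw [coeff_mul_mk, catalan_succ']
    rw [Finset.Nat.sum_antidiagonal_eq_sum_range_succ_mk]
    push_cast
    simp

theorem hq : Tz * (1 - 2*PowerSeries.X) = PowerSeries.X + PowerSeries.X * Tz^2 := by
  linear_combination (1 - PowerSeries.X) * eqT + hGz + PowerSeries.X * Tz * eqS

theorem hq2 : (Cs - 1) * (1 - 2*PowerSeries.X) = PowerSeries.X + PowerSeries.X * (Cs - 1)^2 := by
  linear_combination hC

theorem Tz_eq : Tz = Cs - 1 := by
  have factor : (Tz - (Cs - 1)) * ((1 - 2*PowerSeries.X) - PowerSeries.X*(Tz + (Cs - 1))) = 0 := by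
    linear_combination hq - hq2
  have h2 : ((1 - 2*PowerSeries.X) - PowerSeries.X*(Tz + (Cs - 1))) ≠ 0 := by
    intro h
    have := congrArg (PowerSeries.constantCoeff) h
    simp [map_sub, map_mul, PowerSeries.constantCoeff_X] at this
  rcases mul_eq_zero.mp factor with h | h
  · exact sub_eq_zero.mp h
  · exact absurd h h2

theorem stmt3 : PowerSeries.mk (fun n => (∑ k ∈ Finset.range (n + 1), (bcount n k : ℚ)))
    = PowerSeries.mk (fun n => (catalan n : ℚ)) - 1 := by
  have hL : PowerSeries.mk (fun n => (∑ k ∈ Finset.range (n + 1), (bcount n k : ℚ))) = Tz := by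
    ext n
    simp only [PowerSeries.coeff_mk, Tz]
    rw [← bt_sum n]
    push_cast
    apply Finset.sum_congr rfl
    intro k _
    rw [bcount_eq]
  rw [hL, Tz_eq, Cs]


noncomputable def mm (n k : ℕ) : Fin 2 →₀ ℕ := Finsupp.single (0 : Fin 2) n + Finsupp.single 1 k

@[simp] theorem mm_apply0 (n k : ℕ) : mm n k 0 = n := by
  simp [mm, Finsupp.single_apply]

@[simp] theorem mm_apply1 (n k : ℕ) : mm n k 1 = k := by
  simp [mm, Finsupp.single_apply]

theorem eq_mm (e : Fin 2 →₀ ℕ) : e = mm (e 0) (e 1) := by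
  ext x
  fin_cases x <;> simp

theorem mm_inj {n k n' k' : ℕ} : mm n k = mm n' k' ↔ n = n' ∧ k = k' := by
  constructor
  · intro h
    constructor
    · have := congrArg (fun f => f 0) h; simpa using this
    · have := congrArg (fun f => f 1) h; simpa using this
  · rintro ⟨rfl, rfl⟩; rfl

theorem mm_add (n k n' k' : ℕ) : mm n k + mm n' k' = mm (n + n') (k + k') := by
  ext x; fin_cases x <;> simp

theorem ext_mm {f g : MvPowerSeries (Fin 2) ℚ}
    (h : ∀ n k, MvPowerSeries.coeff (mm n k) f = MvPowerSeries.coeff (mm n k) g) : f = g := by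
  apply MvPowerSeries.ext
  intro e
  rw [eq_mm e]
  exact h _ _

theorem coeff_mul_mm (f g : MvPowerSeries (Fin 2) ℚ) (n k : ℕ) :
    MvPowerSeries.coeff (mm n k) (f * g)
      = ∑ i ∈ range (n+1), ∑ j ∈ range (k+1),
          MvPowerSeries.coeff (mm i j) f * MvPowerSeries.coeff (mm (n-i) (k-j)) g := by
  rw [MvPowerSeries.coeff_mul]
  rw [← Finset.sum_product']
  apply Finset.sum_nbij' (i := fun p => (p.1 0, p.1 1))
    (j := fun p => (mm p.1 p.2, mm (n - p.1) (k - p.2)))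
  · intro p hp
    rw [Finset.HasAntidiagonal.mem_antidiagonal] at hp
    have h0 := congrArg (fun f => f 0) hp
    have h1 := congrArg (fun f => f 1) hp
    simp only [Finsupp.add_apply, mm_apply0, mm_apply1] at h0 h1
    simp only [Finset.mem_product, Finset.mem_range]
    omega
  · intro p hp
    simp only [Finset.mem_product, Finset.mem_range] at hp
    rw [Finset.HasAntidiagonal.mem_antidiagonal, mm_add]
    rw [mm_inj]
    omega
  · intro p hp
    rw [Finset.HasAntidiagonal.mem_antidiagonal] at hp
    have h0 := congrArg (fun f => f 0) hp
    have h1 := congrArg (fun f => f 1) hp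
    simp only [Finsupp.add_apply, mm_apply0, mm_apply1] at h0 h1
    have e1 : p.1 = mm (p.1 0) (p.1 1) := eq_mm _
    have e2 : p.2 = mm (n - p.1 0) (k - p.1 1) := by
      rw [eq_mm p.2]; rw [mm_inj]; omega
    exact Prod.ext e1.symm e2.symm
  · intro p hp
    simp
  · intro p hp
    rw [Finset.HasAntidiagonal.mem_antidiagonal] at hp
    have h0 := congrArg (fun f => f 0) hp
    have h1 := congrArg (fun f => f 1) hp
    simp only [Finsupp.add_apply, mm_apply0, mm_apply1] at h0 h1
    have e1 : p.1 = mm (p.1 0) (p.1 1) := eq_mm _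
    have e2 : p.2 = mm (n - p.1 0) (k - p.1 1) := by
      rw [eq_mm p.2]; rw [mm_inj]; omega
    rw [← e1, ← e2]

theorem coeff_z (n k : ℕ) : MvPowerSeries.coeff (mm n k) z = if n = 1 ∧ k = 0 then 1 else 0 := by
  rw [z, MvPowerSeries.coeff_X]
  have : Finsupp.single (0 : Fin 2) 1 = mm 1 0 := by simp [mm]
  rw [this]
  by_cases h : n = 1 ∧ k = 0
  · rw [if_pos (mm_inj.mpr ⟨h.1, h.2⟩), if_pos h]
  · rw [if_neg (fun hc => h (mm_inj.mp hc)), if_neg h]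

theorem coeff_u (n k : ℕ) : MvPowerSeries.coeff (mm n k) u = if n = 0 ∧ k = 1 then 1 else 0 := by
  rw [u, MvPowerSeries.coeff_X]
  have : Finsupp.single (1 : Fin 2) 1 = mm 0 1 := by simp [mm]
  rw [this]
  by_cases h : n = 0 ∧ k = 1
  · rw [if_pos (mm_inj.mpr ⟨h.1, h.2⟩), if_pos h]
  · rw [if_neg (fun hc => h (mm_inj.mp hc)), if_neg h]

theorem coeff_z_mul (f : MvPowerSeries (Fin 2) ℚ) (n k : ℕ) :
    MvPowerSeries.coeff (mm n k) (z * f) = if n = 0 then 0 else MvPowerSeries.coeff (mm (n-1) k) f := by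
  have hz : z = MvPowerSeries.monomial (mm 1 0) 1 := by
    rw [z, MvPowerSeries.X]; congr 1; simp [mm]
  rw [hz, MvPowerSeries.coeff_monomial_mul]
  have hle : mm 1 0 ≤ mm n k ↔ 1 ≤ n := by
    rw [Finsupp.le_def]
    constructor
    · intro h; have := h 0; simpa using this
    · intro h x; fin_cases x <;> simp <;> omega
  by_cases h : n = 0
  · rw [if_neg (by rw [hle]; omega), if_pos h]
  · rw [if_pos (hle.mpr (by omega)), if_neg h, one_mul]
    have : mm n k - mm 1 0 = mm (n-1) k := by
      ext x; fin_cases x <;> simp [Finsupp.tsub_apply] <;> omega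
    rw [this]

theorem coeff_u_mul (f : MvPowerSeries (Fin 2) ℚ) (n k : ℕ) :
    MvPowerSeries.coeff (mm n k) (u * f) = if k = 0 then 0 else MvPowerSeries.coeff (mm n (k-1)) f := by
  have hz : u = MvPowerSeries.monomial (mm 0 1) 1 := by
    rw [u, MvPowerSeries.X]; congr 1; simp [mm]
  rw [hz, MvPowerSeries.coeff_monomial_mul]
  have hle : mm 0 1 ≤ mm n k ↔ 1 ≤ k := by
    rw [Finsupp.le_def]
    constructor
    · intro h; have := h 1; simpa using this
    · intro h x; fin_cases x <;> simp <;> omega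
  by_cases h : k = 0
  · rw [if_neg (by rw [hle]; omega), if_pos h]
  · rw [if_pos (hle.mpr (by omega)), if_neg h, one_mul]
    have : mm n k - mm 0 1 = mm n (k-1) := by
      ext x; fin_cases x <;> simp [Finsupp.tsub_apply] <;> omega
    rw [this]

theorem coeff_one_mm (n k : ℕ) : MvPowerSeries.coeff (mm n k) (1 : MvPowerSeries (Fin 2) ℚ)
    = if n = 0 ∧ k = 0 then 1 else 0 := by
  have h0 : mm 0 0 = 0 := by ext x; fin_cases x <;> simp
  rw [MvPowerSeries.coeff_one]
  by_cases h : n = 0 ∧ k = 0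
  · rw [if_pos (by rw [← h0]; exact mm_inj.mpr (by omega)), if_pos h]
  · rw [if_neg, if_neg h]
    intro hc
    exact h (mm_inj.mp (by rw [hc, h0]))

theorem coeff_Tzu (n k : ℕ) : MvPowerSeries.coeff (mm n k) Tzu = (bt n k : ℚ) := by
  rw [MvPowerSeries.coeff_apply]
  show (bcount (mm n k 0) (mm n k 1) : ℚ) = _
  rw [mm_apply0, mm_apply1, bcount_eq]

theorem coeff_Szu (n k : ℕ) : MvPowerSeries.coeff (mm n k) Szu = (bs' n k : ℚ) := by
  rw [MvPowerSeries.coeff_apply]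
  show (bscount (mm n k 0) (mm n k 1) : ℚ) = _
  rw [mm_apply0, mm_apply1, bscount_eq]

theorem stmt2 : Szu = z * Tzu + z * Szu + z := by
  apply ext_mm
  intro n k
  rw [map_add, map_add, coeff_Szu, coeff_z_mul, coeff_z_mul, coeff_z]
  rcases n with _ | m
  · simp [bs0]
  · simp only [Nat.succ_ne_zero, if_false, Nat.add_sub_cancel]
    rw [coeff_Tzu, coeff_Szu, bs_succ]
    push_cast
    by_cases hm : m = 0
    · by_cases hk : k = 0 <;> simp [hm, hk]
    · simp [hm]

noncomputable def G2 : MvPowerSeries (Fin 2) ℚ :=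
  fun e => if 1 ≤ e 0 ∧ e 1 = 0 then 1 else 0

theorem coeff_G2 (n k : ℕ) :
    MvPowerSeries.coeff (mm n k) G2 = if 1 ≤ n ∧ k = 0 then 1 else 0 := by
  rw [MvPowerSeries.coeff_apply]
  show (if 1 ≤ mm n k 0 ∧ mm n k 1 = 0 then (1:ℚ) else 0) = _
  rw [mm_apply0, mm_apply1]

theorem hG2 : G2 * (1 - z) = z := by
  have h : G2 * (1 - z) = G2 - z * G2 := by ring
  rw [h]
  apply ext_mm
  intro n k
  rw [map_sub, coeff_G2, coeff_z_mul, coeff_z]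
  rcases n with _ | m
  · simp
  · simp only [Nat.succ_ne_zero, if_false, Nat.add_sub_cancel]
    rw [coeff_G2]
    rcases m with _ | m'
    · by_cases hk : k = 0 <;> simp [hk]
    · by_cases hk : k = 0 <;> simp [hk]

theorem hzinv : z * (1 - z)⁻¹ = G2 := by
  have hc : MvPowerSeries.constantCoeff (1 - z) ≠ 0 := by
    rw [map_sub]
    simp [z, MvPowerSeries.constantCoeff_X]
  calc z * (1-z)⁻¹ = (G2 * (1 - z)) * (1-z)⁻¹ := by rw [hG2]
    _ = G2 * ((1 - z) * (1-z)⁻¹) := by ring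
    _ = G2 := by rw [MvPowerSeries.mul_inv_cancel _ hc, mul_one]

theorem star0 (m : ℕ) : bt (m+1) 0 + cLT m 0 = 1 + bt m 0 + cTS m 0 + cTT m 0 := by
  have h := bt_succ m 0
  have h2 := cTT_split m 0
  norm_num at h
  omega

theorem starS (m j : ℕ) :
    bt (m+1) (j+1) + cLT m (j+1) = bt m (j+1) + cTS m (j+1) + cTT m (j+1) + cLT m j := by
  have h := bt_succ m (j+1)
  have h2 := cTT_split m (j+1)
  simp only [Nat.succ_ne_zero, if_false, Nat.add_sub_cancel] at h
  omega

theorem cLT_eq' (m j : ℕ) : (if m = 0 then (0:ℚ) else (cTT (m-1) j : ℕ)) = (cLT m j : ℚ) := by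
  rcases m with _ | m'
  · simp [cLT0]
  · simp [cLT_succ]

theorem cTTq (m j : ℕ) :
    MvPowerSeries.coeff (mm m j) (Tzu * Tzu) = (cTT m j : ℚ) := by
  rw [coeff_mul_mm, cTT]
  push_cast
  exact Finset.sum_congr rfl fun i _ => Finset.sum_congr rfl fun j' _ => by
    rw [coeff_Tzu, coeff_Tzu]

theorem cTSq (m j : ℕ) :
    MvPowerSeries.coeff (mm m j) (Tzu * Szu) = (cTS m j : ℚ) := by
  rw [coeff_mul_mm, cTS]
  push_cast
  exact Finset.sum_congr rfl fun i _ => Finset.sum_congr rfl fun j' _ => by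
    rw [coeff_Tzu, coeff_Szu]

theorem stmt1 : Tzu = z * (1 - z)⁻¹ + z * Tzu + z * Tzu * Szu + z * Tzu ^ 2
    + (u - 1) * z ^ 2 * Tzu ^ 2 := by
  rw [hzinv]
  have hE : G2 + z * Tzu + z * Tzu * Szu + z * Tzu ^ 2 + (u - 1) * z ^ 2 * Tzu ^ 2
      = G2 + z * Tzu + z * (Tzu * Szu) + z * (Tzu * Tzu)
        + u * (z * (z * (Tzu * Tzu))) - z * (z * (Tzu * Tzu)) := by ring
  rw [hE]
  apply ext_mm
  intro n k
  rw [map_sub, map_add, map_add, map_add, map_add]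
  simp only [coeff_z_mul, coeff_u_mul, coeff_Tzu, coeff_G2, cTTq, cTSq]
  rcases n with _ | m
  · simp [bt0]
  · simp only [Nat.succ_ne_zero, if_false, Nat.add_sub_cancel, Nat.le_add_left,
      true_and]
    have hcast0 := star0 m
    rcases k with _ | j
    · simp only [if_pos rfl]
      rw [show (if m = 0 then (0:ℚ) else (cTT (m-1) 0 : ℕ)) = (cLT m 0 : ℚ) from cLT_eq' m 0]
      have : ((bt (m+1) 0 + cLT m 0 : ℕ) : ℚ) = ((1 + bt m 0 + cTS m 0 + cTT m 0 : ℕ) : ℚ) := by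
        rw [star0 m]
      push_cast at this
      push_cast
      linarith
    · simp only [Nat.succ_ne_zero, if_false, Nat.add_sub_cancel]
      rw [show (if m = 0 then (0:ℚ) else (cTT (m-1) (j+1) : ℕ)) = (cLT m (j+1) : ℚ) from
        cLT_eq' m (j+1)]
      rw [show (if m = 0 then (0:ℚ) else (cTT (m-1) j : ℕ)) = (cLT m j : ℚ) from cLT_eq' m j]
      have : ((bt (m+1) (j+1) + cLT m (j+1) : ℕ) : ℚ)
          = ((bt m (j+1) + cTS m (j+1) + cTT m (j+1) + cLT m j : ℕ) : ℚ) := by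
        rw [starS m j]
      push_cast at this
      push_cast
      linarith


/-- the bivariate generating-function system for β-redexes, and the
specialization u = 1 recovering T(z,1) = C(z) - 1. -/
theorem stmt13 :
    Tzu = z * (1 - z)⁻¹ + z * Tzu + z * Tzu * Szu + z * Tzu ^ 2
        + (u - 1) * z ^ 2 * Tzu ^ 2 ∧
    Szu = z * Tzu + z * Szu + z ∧
    PowerSeries.mk (fun n => (∑ k ∈ Finset.range (n + 1), (bcount n k : ℚ)))
      = PowerSeries.mk (fun n => (catalan n : ℚ)) - 1 := by
  exact ⟨stmt1, stmt2, stmt3⟩
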